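/- Let X and Y be disjoint finite sets of points on the unit circle {x ∈ ℝ² : ‖x‖ = 1}, each of even cardinality. Then there exist a nonzero linear functional f : ℝ² → ℝ and a real number t such that exactly |X|/2 points of X satisfy f(x) < t and exactly |X|/2 points of X satisfy f(x) > t, and exactly |Y|/2 points of Y satisfy f(y) < t and exactly |Y|/2 points of Y satisfy f(y) > t. -/

import Mathlib

open Finset

namespace BisectAux

/-- The point on the unit circle at angle `a`. -/
noncomputable def ptc (a : ℝ) : EuclideanSpace ℝ (Fin 2) :=
  (WithLp.equiv 2 (Fin 2 → ℝ)).symm ![Real.cos a, Real.sin a]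

lemma ptc_apply0 (a : ℝ) : ptc a 0 = Real.cos a := rfl
lemma ptc_apply1 (a : ℝ) : ptc a 1 = Real.sin a := rfl

/-- The angle of a point. -/
noncomputable def angc (p : EuclideanSpace ℝ (Fin 2)) : ℝ :=
  Complex.arg ⟨p 0, p 1⟩

lemma angc_mem (p : EuclideanSpace ℝ (Fin 2)) :
    -Real.pi < angc p ∧ angc p ≤ Real.pi :=
  ⟨Complex.neg_pi_lt_arg _, Complex.arg_le_pi _⟩

lemma sq_coords (p : EuclideanSpace ℝ (Fin 2)) (hp : ‖p‖ = 1) :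
    p 0 ^ 2 + p 1 ^ 2 = 1 := by
  have h := EuclideanSpace.norm_eq p
  rw [hp] at h
  have h2 : ∑ i : Fin 2, ‖p i‖ ^ 2 = p 0 ^ 2 + p 1 ^ 2 := by
    rw [Fin.sum_univ_two]
    simp [Real.norm_eq_abs, sq_abs]
  rw [h2] at h
  nlinarith [Real.sq_sqrt (show (0:ℝ) ≤ p 0 ^ 2 + p 1 ^ 2 by positivity), h]

lemma ptc_angc (p : EuclideanSpace ℝ (Fin 2)) (hp : ‖p‖ = 1) :
    ptc (angc p) = p := by
  set z : ℂ := ⟨p 0, p 1⟩ with hz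
  have hsq := sq_coords p hp
  have habs : ‖z‖ = 1 := by
    rw [Complex.norm_def, Complex.normSq_mk]
    rw [show p 0 * p 0 + p 1 * p 1 = 1 by nlinarith]
    exact Real.sqrt_one
  have hz0 : z ≠ 0 := by
    intro h; rw [h] at habs; simp at habs
  have hcos : Real.cos (angc p) = p 0 := by
    have := Complex.cos_arg hz0
    rw [habs] at this
    simpa [angc, hz] using this
  have hsin : Real.sin (angc p) = p 1 := by
    have := Complex.sin_arg z
    rw [habs] at this
    simpa [angc, hz] using this
  ext i
  fin_cases i
  · exact hcos
  · exact hsin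

/-- A linear functional on `ℝ²` given by coefficients. -/
noncomputable def lf (u v : ℝ) : EuclideanSpace ℝ (Fin 2) →ₗ[ℝ] ℝ where
  toFun x := u * x 0 + v * x 1
  map_add' x y := by
    simp only [PiLp.add_apply]; ring
  map_smul' c x := by
    simp only [PiLp.smul_apply, smul_eq_mul, RingHom.id_apply]; ring

lemma lf_ptc (u v a : ℝ) : lf u v (ptc a) = u * Real.cos a + v * Real.sin a := rfl

/-- Discrete intermediate value theorem on ℕ. -/
lemma nat_ivt (f : ℕ → ℕ) (hstep : ∀ i, f (i+1) ≤ f i + 1 ∧ f i ≤ f (i+1) + 1) (h : ℕ) :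
    ∀ d a, (f a ≤ h ∨ f (a + d) ≤ h) → (h ≤ f a ∨ h ≤ f (a + d)) →
      ∃ j, a ≤ j ∧ j ≤ a + d ∧ f j = h := by
  intro d
  induction d with
  | zero =>
    intro a h1 h2
    refine ⟨a, le_refl _, by omega, ?_⟩
    simp only [Nat.add_zero] at h1 h2
    omega
  | succ d ih =>
    intro a h1 h2
    rcases Nat.lt_trichotomy (f a) h with hlt | heq | hgt
    · -- f a < h, so h ≤ f (a + (d+1)) and f (a+1) ≤ f a + 1 ≤ h
      have h2' : h ≤ f (a + (d+1)) := by omega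
      have hs := hstep a
      obtain ⟨j, hj1, hj2, hj3⟩ := ih (a+1)
        (Or.inl (by omega))
        (Or.inr (by rw [show a + 1 + d = a + (d+1) by omega]; exact h2'))
      exact ⟨j, by omega, by omega, hj3⟩
    · exact ⟨a, le_refl _, by omega, heq⟩
    · have h1' : f (a + (d+1)) ≤ h := by omega
      have hs := hstep a
      obtain ⟨j, hj1, hj2, hj3⟩ := ih (a+1)
        (Or.inr (by rw [show a + 1 + d = a + (d+1) by omega]; exact h1'))
        (Or.inl (by omega))
      exact ⟨j, by omega, by omega, hj3⟩

lemma mod_inj {n i m1 m2 : ℕ} (h1 : i ≤ m1) (h2 : m1 < i + n) (h3 : i ≤ m2)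
    (h4 : m2 < i + n) (h : m1 % n = m2 % n) : m1 = m2 := by
  rcases le_total m1 m2 with hle | hle
  · have hdvd : n ∣ m2 - m1 := (Nat.modEq_iff_dvd' hle).mp h
    rcases Nat.eq_zero_or_pos (m2 - m1) with h0 | hpos
    · omega
    · have := Nat.le_of_dvd hpos hdvd; omega
  · have hdvd : n ∣ m1 - m2 := (Nat.modEq_iff_dvd' hle).mp h.symm
    rcases Nat.eq_zero_or_pos (m1 - m2) with h0 | hpos
    · omega
    · have := Nat.le_of_dvd hpos hdvd; omega

lemma cnt_shift (P : ℕ → Prop) [DecidablePred P] (n : ℕ) (hper : ∀ m, P (m + n) ↔ P m) :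
    ∀ i, ((Finset.Ico i (i+n)).filter P).card = ((Finset.range n).filter P).card := by
  intro i
  induction i with
  | zero => rw [Finset.range_eq_Ico, Nat.zero_add]
  | succ i ih =>
    rcases Nat.eq_zero_or_pos n with h0 | hn
    · subst h0; simp
    · rw [← ih]
      have e1 : Finset.Ico i (i+n) = insert i (Finset.Ico (i+1) (i+n)) := by
        rw [Finset.Ico_add_one_left_eq_Ioo, Finset.Ioo_insert_left (by omega : i < i + n)]
      have e2 : Finset.Ico (i+1) (i+1+n) = insert (i+n) (Finset.Ico (i+1) (i+n)) := by
        rw [Finset.Ico_insert_right (by omega : i + 1 ≤ i + n),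
          show i+1+n = (i+n)+1 by omega, Finset.Ico_add_one_right_eq_Icc]
      rw [e1, e2, Finset.filter_insert, Finset.filter_insert]
      have hni : i ∉ (Finset.Ico (i+1) (i+n)).filter P := by simp
      have hni2 : i + n ∉ (Finset.Ico (i+1) (i+n)).filter P := by simp
      have hiff := hper i
      by_cases hPi : P i
      · rw [if_pos hPi, if_pos (hiff.mpr hPi),
          Finset.card_insert_of_notMem hni, Finset.card_insert_of_notMem hni2]
      · rw [if_neg hPi, if_neg (fun hc => hPi (hiff.mp hc))]

lemma cos_sep_gt {w x : ℝ} (hw : w ≤ Real.pi) (hx : |x| < w) :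
    Real.cos w < Real.cos x := by
  have := Real.cos_lt_cos_of_nonneg_of_le_pi (abs_nonneg x) hw hx
  rwa [Real.cos_abs] at this

lemma cos_sep_lt {w x : ℝ} (hw0 : 0 ≤ w) (h1 : w < x) (h2 : x < 2 * Real.pi - w) :
    Real.cos x < Real.cos w := by
  rcases le_or_gt x Real.pi with h | h
  · exact Real.cos_lt_cos_of_nonneg_of_le_pi hw0 h h1
  · have hx : Real.cos x = Real.cos (2 * Real.pi - x) := by
      rw [Real.cos_two_pi_sub]
    rw [hx]
    have hpi := Real.pi_pos
    exact Real.cos_lt_cos_of_nonneg_of_le_pi hw0 (by linarith) (by linarith)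

end BisectAux

open BisectAux

/-- **Simultaneous bisection of two point sets on a circle.**
Let `X` and `Y` be disjoint finite sets of points on the unit circle in `ℝ²`, each of even
cardinality. Then there is a line (given by a nonzero linear functional `f` and a constant
`t`) simultaneously bisecting `X` and `Y`: each open half-plane `{x : f x < t}` and
`{x : t < f x}` contains exactly half of the points of `X` and exactly half of those of `Y`. -/
theorem exists_line_bisecting_two_sets_on_circle
    (X Y : Finset (EuclideanSpace ℝ (Fin 2)))
    (hX : ∀ x ∈ X, ‖x‖ = 1) (hY : ∀ y ∈ Y, ‖y‖ = 1)
    (hdisj : Disjoint X Y) (hXeven : Even X.card) (hYeven : Even Y.card) :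
    ∃ (f : EuclideanSpace ℝ (Fin 2) →ₗ[ℝ] ℝ) (t : ℝ), f ≠ 0 ∧
      (X.filter fun x => f x < t).card = X.card / 2 ∧
      (X.filter fun x => t < f x).card = X.card / 2 ∧
      (Y.filter fun y => f y < t).card = Y.card / 2 ∧
      (Y.filter fun y => t < f y).card = Y.card / 2 := by
  classical
  -- abbreviations
  obtain ⟨xh, hxh⟩ := hXeven
  obtain ⟨yh, hyh⟩ := hYeven
  rcases Nat.eq_zero_or_pos (xh + yh) with hk0 | hk1
  · -- degenerate case: both sets empty
    have hX0 : X = ∅ := Finset.card_eq_zero.mp (by omega)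
    have hY0 : Y = ∅ := Finset.card_eq_zero.mp (by omega)
    refine ⟨lf 1 0, 0, ?_, ?_, ?_, ?_, ?_⟩
    · intro hc
      have h1 : lf 1 0 (ptc 0) = 1 := by rw [lf_ptc]; simp
      rw [hc] at h1
      simp at h1
    all_goals subst hX0; subst hY0; simp
  -- main case
  set n := X.card + Y.card with hndef
  set k := xh + yh with hkdef
  have hnk : n = k + k := by omega
  have hn0 : 0 < n := by omega
  have hkn : k < n := by omega
  set S := X ∪ Y with hSdef
  have hXS : X ⊆ S := Finset.subset_union_left
  have hYS : Y ⊆ S := Finset.subset_union_right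
  have hnormS : ∀ p ∈ S, ‖p‖ = 1 := by
    intro p hp
    rcases Finset.mem_union.mp hp with h | h
    · exact hX p h
    · exact hY p h
  have hScard : S.card = n := by
    rw [hSdef, Finset.card_union_of_disjoint hdisj]
  set A := S.image angc with hAdef
  have hAcard : A.card = n := by
    rw [hAdef, Finset.card_image_of_injOn, hScard]
    intro p hp q hq h
    rw [← ptc_angc p (hnormS p hp), h, ptc_angc q (hnormS q hq)]
  set L := A.sort (· ≤ ·) with hLdef
  have hlen : L.length = n := by rw [hLdef, Finset.length_sort, hAcard]
  have hnodup : L.Nodup := Finset.sort_nodup _ _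
  have hsortlt : L.Pairwise (· < ·) := (Finset.sortedLT_sort A).pairwise
  set a : ℕ → ℝ := fun m => L.getD (m % n) 0 with hadef
  have haL : ∀ m : ℕ, a m = L[m % n]'(by rw [hlen]; exact Nat.mod_lt _ hn0) := by
    intro m
    rw [hadef]
    exact List.getD_eq_getElem L 0 _
  have haper : ∀ m, a (m + n) = a m := by
    intro m
    simp only [hadef, Nat.add_mod_right]
  have ha_lt : ∀ m1 m2, m1 < m2 → m2 < n → a m1 < a m2 := by
    intro m1 m2 h12 h2
    have l1 : m1 % n = m1 := Nat.mod_eq_of_lt (by omega)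
    have l2 : m2 % n = m2 := Nat.mod_eq_of_lt h2
    have g1 : a m1 = L.get ⟨m1, by rw [hlen]; omega⟩ := by
      rw [haL m1]
      simp only [l1, List.get_eq_getElem]
    have g2 : a m2 = L.get ⟨m2, by rw [hlen]; omega⟩ := by
      rw [haL m2]
      simp only [l2, List.get_eq_getElem]
    rw [g1, g2]
    exact hsortlt.rel_get_of_lt (Fin.mk_lt_mk.mpr h12)
  have ha_memA : ∀ m, a m ∈ A := by
    intro m
    have : a m ∈ L := by
      rw [haL m]
      exact List.getElem_mem _
    rwa [hLdef, Finset.mem_sort] at this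
  have ha_ang : ∀ v ∈ A, ptc v ∈ S ∧ angc (ptc v) = v := by
    intro v hv
    obtain ⟨p, hp, rfl⟩ := Finset.mem_image.mp hv
    rw [ptc_angc p (hnormS p hp)]
    exact ⟨hp, rfl⟩
  have ha_surj : ∀ v ∈ A, ∃ m, m < n ∧ a m = v := by
    intro v hv
    have hvL : v ∈ L := by rw [hLdef]; rwa [Finset.mem_sort]
    obtain ⟨m, hm, he⟩ := List.mem_iff_getElem.mp hvL
    refine ⟨m, by omega, ?_⟩
    rw [haL m]
    have : m % n = m := Nat.mod_eq_of_lt (by omega)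
    simp only [this]
    exact he
  have hamem_pi : ∀ m, -Real.pi < a m ∧ a m ≤ Real.pi := by
    intro m
    obtain ⟨p, _, he⟩ := Finset.mem_image.mp (ha_memA m)
    rw [← he]
    exact angc_mem p
  -- counting over a full period
  have hcount : ∀ Z : Finset (EuclideanSpace ℝ (Fin 2)), Z ⊆ S →
      ((Finset.range n).filter fun m => ptc (a m) ∈ Z).card = Z.card := by
    intro Z hZ
    apply Finset.card_bij (fun m _ => ptc (a m))
    · intro m hm
      exact (Finset.mem_filter.mp hm).2
    · intro m1 hm1 m2 hm2 he
      have e1 := (ha_ang _ (ha_memA m1)).2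
      have e2 := (ha_ang _ (ha_memA m2)).2
      have hae : a m1 = a m2 := by rw [← e1, ← e2, he]
      rw [haL m1, haL m2] at hae
      have hmm := (List.Nodup.getElem_inj_iff hnodup).mp hae
      have b1 : m1 < n := Finset.mem_range.mp (Finset.mem_filter.mp hm1).1
      have b2 : m2 < n := Finset.mem_range.mp (Finset.mem_filter.mp hm2).1
      rw [Nat.mod_eq_of_lt b1, Nat.mod_eq_of_lt b2] at hmm
      exact hmm
    · intro z hz
      obtain ⟨m, hm, he⟩ := ha_surj (angc z) (Finset.mem_image_of_mem _ (hZ hz))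
      have hpz : ptc (a m) = z := by rw [he, ptc_angc z (hnormS z (hZ hz))]
      refine ⟨m, Finset.mem_filter.mpr ⟨Finset.mem_range.mpr hm, ?_⟩, hpz⟩
      rw [hpz]
      exact hz
  have htotal : ∀ (i0 : ℕ) (Z : Finset (EuclideanSpace ℝ (Fin 2))), Z ⊆ S →
      ((Finset.Ico i0 (i0 + n)).filter fun m => ptc (a m) ∈ Z).card = Z.card := by
    intro i0 Z hZ
    rw [cnt_shift _ n (fun m => by rw [haper m]) i0]
    exact hcount Z hZ
  have hsplit : ∀ (i0 : ℕ) (Z : Finset (EuclideanSpace ℝ (Fin 2))), Z ⊆ S →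
      ((Finset.Ico i0 (i0 + k)).filter fun m => ptc (a m) ∈ Z).card +
      ((Finset.Ico (i0 + k) (i0 + n)).filter fun m => ptc (a m) ∈ Z).card = Z.card := by
    intro i0 Z hZ
    have hd : Disjoint ((Finset.Ico i0 (i0 + k)).filter fun m => ptc (a m) ∈ Z)
        ((Finset.Ico (i0 + k) (i0 + n)).filter fun m => ptc (a m) ∈ Z) :=
      Finset.disjoint_filter_filter (Finset.Ico_disjoint_Ico_consecutive _ _ _)
    rw [← Finset.card_union_of_disjoint hd, ← Finset.filter_union,
      Finset.Ico_union_Ico_eq_Ico (by omega) (by omega)]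
    exact htotal i0 Z hZ
  set r : ℕ → ℕ := fun i0 => ((Finset.Ico i0 (i0 + k)).filter fun m => ptc (a m) ∈ X).card
    with hrdef
  have hrstep : ∀ i0, r (i0 + 1) ≤ r i0 + 1 ∧ r i0 ≤ r (i0 + 1) + 1 := by
    intro i0
    have e1 : Finset.Ico i0 (i0 + k) = insert i0 (Finset.Ico (i0 + 1) (i0 + k)) := by
      rw [Finset.Ico_add_one_left_eq_Ioo, Finset.Ioo_insert_left (by omega : i0 < i0 + k)]
    have e2 : Finset.Ico (i0 + 1) (i0 + 1 + k) = insert (i0 + k) (Finset.Ico (i0 + 1) (i0 + k)) := by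
      rw [Finset.Ico_insert_right (by omega : i0 + 1 ≤ i0 + k),
        show i0 + 1 + k = (i0 + k) + 1 by omega, Finset.Ico_add_one_right_eq_Icc]
    have c1 : r i0 = ((Finset.Ico (i0 + 1) (i0 + k)).filter fun m => ptc (a m) ∈ X).card +
        (if ptc (a i0) ∈ X then 1 else 0) := by
      rw [hrdef]
      simp only []
      rw [e1, Finset.filter_insert]
      split
      · rw [Finset.card_insert_of_notMem (by simp)]
      · omega
    have c2 : r (i0 + 1) = ((Finset.Ico (i0 + 1) (i0 + k)).filter fun m => ptc (a m) ∈ X).card +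
        (if ptc (a (i0 + k)) ∈ X then 1 else 0) := by
      rw [hrdef]
      simp only []
      rw [e2, Finset.filter_insert]
      split
      · rw [Finset.card_insert_of_notMem (by simp)]
      · omega
    split_ifs at c1 c2 <;> omega
  -- discrete IVT to find a balanced window
  have hsum0 : r 0 + r (0 + k) = X.card := by
    have h := hsplit 0 X hXS
    rw [hrdef]
    simp only []
    rw [show (0:ℕ) + k + k = 0 + n by omega]
    exact h
  obtain ⟨i, hi0, hik, hri⟩ := nat_ivt r hrstep xh k 0 (by omega) (by omega)
  have hin : i < n := by omega
  -- the unwrapped angles of the window starting at i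
  set g : ℕ → ℝ := fun j => if i + j < n then a (i + j) else a (i + j) + 2 * Real.pi
    with hgdef
  have hpi := Real.pi_pos
  have hgmono : ∀ j1 j2, j1 < j2 → j2 < n → g j1 < g j2 := by
    intro j1 j2 h12 h2
    simp only [hgdef]
    by_cases c1 : i + j1 < n <;> by_cases c2 : i + j2 < n
    · rw [if_pos c1, if_pos c2]
      exact ha_lt _ _ (by omega) c2
    · rw [if_pos c1, if_neg c2]
      have b1 := (hamem_pi (i + j1)).2
      have b2 := (hamem_pi (i + j2)).1
      linarith
    · omega
    · rw [if_neg c1, if_neg c2]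
      have e1 : a (i + j1) = a (i + j1 - n) := by
        conv_lhs => rw [show i + j1 = (i + j1 - n) + n by omega, haper]
      have e2 : a (i + j2) = a (i + j2 - n) := by
        conv_lhs => rw [show i + j2 = (i + j2 - n) + n by omega, haper]
      rw [e1, e2]
      have := ha_lt (i + j1 - n) (i + j2 - n) (by omega) (by omega)
      linarith
  have hgmono' : ∀ j1 j2, j1 ≤ j2 → j2 < n → g j1 ≤ g j2 := by
    intro j1 j2 h12 h2
    rcases eq_or_lt_of_le h12 with h | h
    · rw [h]
    · exact le_of_lt (hgmono j1 j2 h h2)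
  have hgwrap : g (n - 1) < g 0 + 2 * Real.pi := by
    simp only [hgdef]
    rcases Nat.eq_zero_or_pos i with h0 | hip
    · rw [if_pos (by omega), if_pos (by omega)]
      have b1 := (hamem_pi (i + (n - 1))).2
      have b2 := (hamem_pi (i + 0)).1
      linarith
    · rw [if_neg (by omega), if_pos (by omega)]
      have e1 : a (i + (n - 1)) = a (i - 1) := by
        conv_lhs => rw [show i + (n - 1) = (i - 1) + n by omega, haper]
      rw [e1]
      have := ha_lt (i - 1) (i + 0) (by omega) (by omega)
      linarith
  set c := (g 0 + (g (n - 1) - 2 * Real.pi)) / 2 with hcdef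
  set d := (g (k - 1) + g k) / 2 with hddef
  have hc1 : g (n - 1) - 2 * Real.pi < c := by rw [hcdef]; linarith [hgwrap]
  have hc2 : c < g 0 := by rw [hcdef]; linarith [hgwrap]
  have hdlt : g (k - 1) < g k := hgmono (k - 1) k (by omega) (by omega)
  have hd1 : g (k - 1) < d := by rw [hddef]; linarith
  have hd2 : d < g k := by rw [hddef]; linarith
  have hcd : c < d :=
    lt_of_lt_of_le hc2 (le_trans (hgmono' 0 (k - 1) (by omega) (by omega)) (le_of_lt hd1))
  have hdc : d < c + 2 * Real.pi := by
    have h1 : g k ≤ g (n - 1) := hgmono' k (n - 1) (by omega) (by omega)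
    linarith
  set m0 := (c + d) / 2 with hm0def
  set w := (d - c) / 2 with hwdef
  set t := Real.cos w with htdef
  have hw0 : 0 < w := by rw [hwdef]; linarith
  have hwpi : w < Real.pi := by rw [hwdef]; linarith
  set f := lf (Real.cos m0) (Real.sin m0) with hfdef
  have hf : ∀ v, f (ptc v) = Real.cos (v - m0) := by
    intro v
    rw [hfdef, lf_ptc, Real.cos_sub]
    ring
  have hfne : f ≠ 0 := by
    intro hc
    have h1 : f (ptc m0) = 1 := by rw [hf, sub_self, Real.cos_zero]
    rw [hc] at h1
    simp at h1
  have hcosval : ∀ j, f (ptc (a (i + j))) = Real.cos (g j - m0) := by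
    intro j
    rw [hf]
    simp only [hgdef]
    split
    · rfl
    · rw [show a (i + j) + 2 * Real.pi - m0 = (a (i + j) - m0) + 2 * Real.pi by ring,
        Real.cos_add_two_pi]
  have hgeo1 : ∀ m, i ≤ m → m < i + k → t < f (ptc (a m)) := by
    intro m h1 h2
    rw [show m = i + (m - i) by omega, hcosval (m - i)]
    have hb1 : c < g (m - i) := lt_of_lt_of_le hc2 (hgmono' 0 (m - i) (by omega) (by omega))
    have hb2 : g (m - i) < d :=
      lt_of_le_of_lt (hgmono' (m - i) (k - 1) (by omega) (by omega)) hd1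
    rw [htdef]
    apply cos_sep_gt (le_of_lt hwpi)
    rw [abs_lt]
    constructor <;> [skip; skip] <;>
      · rw [hwdef] at *
        rw [hm0def] at *
        linarith
  have hgeo2 : ∀ m, i + k ≤ m → m < i + n → f (ptc (a m)) < t := by
    intro m h1 h2
    rw [show m = i + (m - i) by omega, hcosval (m - i)]
    have hb1 : d < g (m - i) := lt_of_lt_of_le hd2 (hgmono' k (m - i) (by omega) (by omega))
    have hb2 : g (m - i) ≤ g (n - 1) := hgmono' (m - i) (n - 1) (by omega) (by omega)
    rw [htdef]
    apply cos_sep_lt (le_of_lt hw0)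
    · rw [hwdef] at *; rw [hm0def] at *; linarith
    · rw [hwdef] at *; rw [hm0def] at *; linarith
  -- the master counting bijection
  have key : ∀ (Z : Finset (EuclideanSpace ℝ (Fin 2))), Z ⊆ S → ∀ (lo hi : ℕ) (Q : ℝ → Prop),
      i ≤ lo → hi ≤ i + n →
      (∀ m, lo ≤ m → m < hi → Q (f (ptc (a m)))) →
      (∀ m, i ≤ m → m < i + n → Q (f (ptc (a m))) → lo ≤ m ∧ m < hi) →
      ((Finset.Ico lo hi).filter fun m => ptc (a m) ∈ Z).card =
        (Z.filter fun z => Q (f z)).card := by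
    intro Z hZ lo hi Q hlo hhi hinQ hout
    apply Finset.card_bij (fun m _ => ptc (a m))
    · intro m hm
      obtain ⟨hmI, hmZ⟩ := Finset.mem_filter.mp hm
      obtain ⟨hm1, hm2⟩ := Finset.mem_Ico.mp hmI
      exact Finset.mem_filter.mpr ⟨hmZ, hinQ m hm1 hm2⟩
    · intro m1 hm1 m2 hm2 he
      have e1 := (ha_ang _ (ha_memA m1)).2
      have e2 := (ha_ang _ (ha_memA m2)).2
      have hae : a m1 = a m2 := by rw [← e1, ← e2, he]
      rw [haL m1, haL m2] at hae
      have hmm := (List.Nodup.getElem_inj_iff hnodup).mp hae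
      obtain ⟨b1, b2⟩ := Finset.mem_Ico.mp (Finset.mem_filter.mp hm1).1
      obtain ⟨b3, b4⟩ := Finset.mem_Ico.mp (Finset.mem_filter.mp hm2).1
      exact mod_inj (n := n) (i := i) (by omega) (by omega) (by omega) (by omega) hmm
    · intro z hz
      obtain ⟨hzZ, hzQ⟩ := Finset.mem_filter.mp hz
      obtain ⟨m1, hm1n, he⟩ := ha_surj (angc z) (Finset.mem_image_of_mem _ (hZ hzZ))
      set m := if m1 < i then m1 + n else m1 with hmdef
      have ham : a m = angc z := by
        rw [hmdef]
        split
        · rw [haper]; exact he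
        · exact he
      have hpz : ptc (a m) = z := by rw [ham, ptc_angc z (hnormS z (hZ hzZ))]
      have hmi : i ≤ m ∧ m < i + n := by rw [hmdef]; split <;> omega
      obtain ⟨hA1, hA2⟩ := hout m hmi.1 hmi.2 (by rw [hpz]; exact hzQ)
      refine ⟨m, Finset.mem_filter.mpr ⟨Finset.mem_Ico.mpr ⟨hA1, hA2⟩, ?_⟩, hpz⟩
      rw [hpz]
      exact hzZ
  -- instantiate the four counts
  have keyX1 := key X hXS i (i + k) (fun v => t < v) le_rfl (by omega) hgeo1
    (by
      intro m hm1 hm2 hQ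
      by_contra hcon
      have : i + k ≤ m := by omega
      exact absurd hQ (not_lt_of_gt (hgeo2 m this hm2)))
  have keyX2 := key X hXS (i + k) (i + n) (fun v => v < t) (by omega) le_rfl hgeo2
    (by
      intro m hm1 hm2 hQ
      by_contra hcon
      have : m < i + k := by omega
      exact absurd hQ (not_lt_of_gt (hgeo1 m hm1 this)))
  have keyY1 := key Y hYS i (i + k) (fun v => t < v) le_rfl (by omega) hgeo1
    (by
      intro m hm1 hm2 hQ
      by_contra hcon
      have : i + k ≤ m := by omega
      exact absurd hQ (not_lt_of_gt (hgeo2 m this hm2)))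
  have keyY2 := key Y hYS (i + k) (i + n) (fun v => v < t) (by omega) le_rfl hgeo2
    (by
      intro m hm1 hm2 hQ
      by_contra hcon
      have : m < i + k := by omega
      exact absurd hQ (not_lt_of_gt (hgeo1 m hm1 this)))
  -- arithmetic on the window counts
  have hXsplit := hsplit i X hXS
  have hYsplit := hsplit i Y hYS
  have hriX : ((Finset.Ico i (i + k)).filter fun m => ptc (a m) ∈ X).card = xh := by
    rw [hrdef] at hri
    exact hri
  have hIcoCard : (Finset.Ico i (i + k)).card = k := by
    rw [Nat.card_Ico]; omega
  have hYwin : ((Finset.Ico i (i + k)).filter fun m => ptc (a m) ∈ Y).card = yh := by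
    have hpt_mem : ∀ m, ptc (a m) ∈ S := fun m => (ha_ang _ (ha_memA m)).1
    have hiff : ∀ m ∈ Finset.Ico i (i + k), (ptc (a m) ∈ Y) ↔ ¬(ptc (a m) ∈ X) := by
      intro m _
      have hs := hpt_mem m
      constructor
      · intro hy hx
        exact Finset.disjoint_left.mp hdisj hx hy
      · intro hx
        rcases Finset.mem_union.mp hs with h | h
        · exact absurd h hx
        · exact h
    rw [Finset.filter_congr hiff]
    have htot := Finset.card_filter_add_card_filter_not
      (s := Finset.Ico i (i + k)) (fun m => ptc (a m) ∈ X)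
    rw [hIcoCard] at htot
    omega
  refine ⟨f, t, hfne, ?_, ?_, ?_, ?_⟩
  · have h1 : (X.filter fun x => f x < t).card =
        ((Finset.Ico (i + k) (i + n)).filter fun m => ptc (a m) ∈ X).card := by
      convert keyX2.symm using 2
    omega
  · have h1 : (X.filter fun x => t < f x).card =
        ((Finset.Ico i (i + k)).filter fun m => ptc (a m) ∈ X).card := by
      convert keyX1.symm using 2
    omega
  · have h1 : (Y.filter fun y => f y < t).card =
        ((Finset.Ico (i + k) (i + n)).filter fun m => ptc (a m) ∈ Y).card := by
      convert keyY2.symm using 2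
    omega
  · have h1 : (Y.filter fun y => t < f y).card =
        ((Finset.Ico i (i + k)).filter fun m => ptc (a m) ∈ Y).card := by
      convert keyY1.symm using 2
    omega
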